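/- Under Assumption (A1), let x₀ ∈ ℝ, let x : [0,∞) → ℝ satisfy x(t) = x₀ + ∫₀ᵗ (f(x(s)) + κ(x(s))) ds for all t ≥ 0, and for δ > 0 let x^δ : [0,∞) → ℝ satisfy x^δ(t) = x₀ + ∫₀ᵗ (f(x^δ(s)) + κ(x^δ(π_δ(s)))) ds for all t ≥ 0. Then for every integer p ≥ 1 there exist δ₀ > 0 and a constant C > 0, independent of t and δ, such that for all δ ∈ (0, δ₀) and all t ≥ 0, |x^δ(t) − x(t)|^p ≤ C·δ^p. -/

import Mathlib

open Set MeasureTheory Filter Topology intervalIntegral Real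

/-- The sampling map `π_δ(t) = δ·⌊t/δ⌋`. -/
noncomputable def piD (δ t : ℝ) : ℝ := δ * (⌊t / δ⌋ : ℤ)


private lemma gb_le (d e a x : ℝ) (ha : 0 < a) (hd : 0 ≤ d) (he : 0 ≤ e) (hx : 0 ≤ x) :
    gronwallBound d (-a) e x ≤ d + e / a := by
  rw [gronwallBound_of_K_ne_0 (neg_ne_zero.2 ha.ne')]
  have hE1 : Real.exp (-a * x) ≤ 1 := by
    rw [← Real.exp_zero]
    exact Real.exp_le_exp.2 (by nlinarith)
  have hE0 : 0 < Real.exp (-a * x) := Real.exp_pos _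
  have hF : 0 ≤ e / a := div_nonneg he ha.le
  have h1 : e / (-a) * (Real.exp (-a * x) - 1) = e / a * (1 - Real.exp (-a * x)) := by
    rw [div_neg]; ring
  simp only []
  rw [h1]
  nlinarith [mul_le_mul_of_nonneg_left hE1 hd]

private lemma cont_of_polyLip {f : ℝ → ℝ} {ξ μ : ℝ} {q : ℕ}
    (h : ∀ a b : ℝ, |f a - f b| ≤ (ξ * (|a| ^ q + |b| ^ q) + μ) * |a - b|) :
    Continuous f := by
  rw [continuous_iff_continuousAt]
  intro b
  rw [ContinuousAt, tendsto_iff_dist_tendsto_zero]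
  have hc : Continuous fun a : ℝ => (ξ * (|a| ^ q + |b| ^ q) + μ) * |a - b| := by
    fun_prop
  have h0 : Tendsto (fun a : ℝ => (ξ * (|a| ^ q + |b| ^ q) + μ) * |a - b|) (𝓝 b)
      (𝓝 ((ξ * (|b| ^ q + |b| ^ q) + μ) * |b - b|)) := hc.tendsto b
  simp only [sub_self, abs_zero, mul_zero] at h0
  exact squeeze_zero (fun a => dist_nonneg) (fun a => by
    simpa [Real.dist_eq] using h a b) h0

private lemma liminf_slope {F : ℝ → ℝ} {F' t : ℝ} (h : HasDerivWithinAt F F' (Ici t) t) :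
    ∀ r, F' < r → ∃ᶠ z in 𝓝[>] t, (z - t)⁻¹ * (F z - F t) < r := fun r hr => by
  have := h.liminf_right_slope_le hr
  simpa [slope_def_field, div_eq_inv_mul] using this

private lemma key
    (f κ : ℝ → ℝ) (x₀ : ℝ) (lam ξ μ γ : ℝ) (q : ℕ)
    (hlam : 0 < lam) (hξ : 0 < ξ) (hμ : 0 < μ) (hγ : 0 < γ)
    (hcontr : ∀ a b : ℝ, (a - b) * (f a - f b) ≤ -lam * (a - b) ^ 2)
    (hfLip : ∀ a b : ℝ, |f a - f b| ≤ (ξ * (|a| ^ q + |b| ^ q) + μ) * |a - b|)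
    (hκbd : ∀ a : ℝ, |κ a| ≤ γ)
    (y u : ℝ → ℝ)
    (hu : ∀ s : ℝ, ∃ a, u s = κ a)
    (hy : ∀ t : ℝ, 0 ≤ t → y t = x₀ + ∫ s in (0:ℝ)..t, (f (y s) + u s))
    (hu_rc : ∀ t : ℝ, 0 ≤ t → ContinuousWithinAt y (Ici t) t →
        ContinuousWithinAt u (Ici t) t)
    (hu_meas : AEStronglyMeasurable y (volume.restrict (Ioi (0:ℝ))) →
        AEStronglyMeasurable u (volume.restrict (Ioi (0:ℝ))))
    (M : ℝ) (hM : M = Real.sqrt (x₀ ^ 2 + ((|f 0| + γ) / lam) ^ 2)) :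
    (∀ t : ℝ, 0 ≤ t → IntervalIntegrable (fun s => f (y s) + u s) volume 0 t)
    ∧ (∀ t : ℝ, 0 ≤ t → |y t| ≤ M)
    ∧ (∀ T : ℝ, 0 ≤ T → ContinuousOn y (Icc 0 T))
    ∧ (∀ t : ℝ, 0 ≤ t → HasDerivWithinAt y (f (y t) + u t) (Ici t) t)
    ∧ (∀ t : ℝ, 0 ≤ t → |f (y t) + u t| ≤ (ξ * (M ^ q + 1) + μ) * M + (|f 0| + γ)) := by
  set g : ℝ → ℝ := fun s => f (y s) + u s with hgdef
  have hub : ∀ s, |u s| ≤ γ := fun s => by obtain ⟨a, ha⟩ := hu s; rw [ha]; exact hκbd a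
  have hfc : Continuous f := cont_of_polyLip hfLip
  have hM0 : 0 ≤ M := hM ▸ Real.sqrt_nonneg _
  have hMsq : M ^ 2 = x₀ ^ 2 + ((|f 0| + γ) / lam) ^ 2 := by
    rw [hM, Real.sq_sqrt (by positivity)]
  have hy0 : y 0 = x₀ := by simpa using hy 0 le_rfl
  -- pointwise bound on g given |y s| ≤ M
  have hgK : ∀ s : ℝ, |y s| ≤ M → |g s| ≤ (ξ * (M ^ q + 1) + μ) * M + (|f 0| + γ) := by
    intro s hsM
    have h1 : |f (y s) - f 0| ≤ (ξ * (M ^ q + 1) + μ) * M := by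
      refine (hfLip (y s) 0).trans ?_
      rw [sub_zero]
      have e1 : |y s| ^ q ≤ M ^ q := pow_le_pow_left₀ (abs_nonneg _) hsM q
      have e2 : |(0:ℝ)| ^ q ≤ 1 := by simpa using zero_pow_le_one q
      exact mul_le_mul (add_le_add (mul_le_mul_of_nonneg_left (add_le_add e1 e2) hξ.le) le_rfl)
        hsM (abs_nonneg _) (by positivity)
    have hgs : g s = (f (y s) - f 0) + (f 0 + u s) := by simp only [hgdef]; ring
    calc |g s| = |(f (y s) - f 0) + (f 0 + u s)| := by rw [hgs]
      _ ≤ |f (y s) - f 0| + |f 0 + u s| := abs_add_le _ _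
      _ ≤ (ξ * (M ^ q + 1) + μ) * M + (|f 0| + γ) :=
          add_le_add h1 ((abs_add_le _ _).trans (add_le_add le_rfl (hub s)))
  -- local result assuming integrability
  have loc : ∀ T : ℝ, 0 ≤ T → IntervalIntegrable g volume 0 T →
      ContinuousOn y (Icc 0 T) ∧ (∀ t ∈ Icc 0 T, |y t| ≤ M)
        ∧ (∀ t ∈ Ico 0 T, HasDerivWithinAt y (g t) (Ici t) t) := by
    intro T hT hint
    have hIcc : uIcc (0:ℝ) T = Icc 0 T := uIcc_of_le hT
    have hcontP : ContinuousOn (fun t => x₀ + ∫ s in (0:ℝ)..t, g s) (Icc 0 T) := by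
      have h := intervalIntegral.continuousOn_primitive_interval' hint
        (by rw [hIcc]; exact ⟨le_rfl, hT⟩)
      rw [hIcc] at h
      exact continuousOn_const.add h
    have hyc : ContinuousOn y (Icc 0 T) :=
      hcontP.congr (fun t ht => hy t ht.1)
    have hmem : ∀ t ∈ Ico 0 T, Icc 0 T ∈ 𝓝[Ici t] t := by
      intro t ht
      exact mem_nhdsWithin.2 ⟨Iio T, isOpen_Iio, ht.2,
        fun s hs => ⟨le_trans ht.1 hs.2, le_of_lt hs.1⟩⟩
    have hyIci : ∀ t ∈ Ico 0 T, ContinuousWithinAt y (Ici t) t := fun t ht =>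
      (hyc t ⟨ht.1, ht.2.le⟩).mono_of_mem_nhdsWithin (hmem t ht)
    have hder : ∀ t ∈ Ico 0 T, HasDerivWithinAt y (g t) (Ici t) t := by
      intro t ht
      have cg : ContinuousWithinAt g (Ici t) t :=
        ((hfc.continuousAt).comp_continuousWithinAt (hyIci t ht)).add
          (hu_rc t ht.1 (hyIci t ht))
      have hmeasI : AEStronglyMeasurable g (volume.restrict (Icc 0 T)) := by
        rw [← Measure.restrict_congr_set Ioc_ae_eq_Icc]
        exact hint.1.aestronglyMeasurable
      have hmem' : Icc 0 T ∈ 𝓝[>] t := mem_nhdsWithin.2 ⟨Iio T, isOpen_Iio, ht.2,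
        fun s hs => ⟨le_trans ht.1 (le_of_lt hs.2), hs.1.le⟩⟩
      have smf : StronglyMeasurableAtFilter g (𝓝[>] t) volume :=
        ⟨Icc 0 T, hmem', hmeasI⟩
      have hint' : IntervalIntegrable g volume 0 t := hint.mono_set
        (by rw [hIcc, uIcc_of_le ht.1]; exact Icc_subset_Icc le_rfl ht.2.le)
      have hd0 : HasDerivWithinAt (fun r => ∫ s in (0:ℝ)..r, g s) (g t) (Ici t) t :=
        intervalIntegral.integral_hasDerivWithinAt_right hint' smf
          (cg.mono Ioi_subset_Ici_self)
      refine (hd0.const_add x₀).congr_of_eventuallyEq ?_ (hy t ht.1)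
      exact eventually_of_mem self_mem_nhdsWithin (fun s hs => hy s (le_trans ht.1 hs))
    refine ⟨hyc, ?_, hder⟩
    set c₀ := |f 0| + γ with hc₀
    have hc₀0 : 0 < c₀ := by positivity
    clear_value c₀
    have hVd : ∀ t ∈ Ico 0 T,
        HasDerivWithinAt (fun s => (y s) ^ 2) (2 * y t * g t) (Ici t) t := by
      intro t ht
      have h := (hder t ht).fun_pow 2
      refine h.congr_deriv ?_
      push_cast
      ring
    have hVb : ∀ t ∈ Ico 0 T, 2 * y t * g t ≤ (-lam) * (y t) ^ 2 + c₀ ^ 2 / lam := by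
      intro t ht
      have h1 : y t * (f (y t) - f 0) ≤ -lam * (y t) ^ 2 := by
        have := hcontr (y t) 0; simpa using this
      have h2 : y t * (f 0 + u t) ≤ |y t| * c₀ := by
        calc y t * (f 0 + u t) ≤ |y t * (f 0 + u t)| := le_abs_self _
          _ = |y t| * |f 0 + u t| := abs_mul _ _
          _ ≤ |y t| * c₀ := mul_le_mul_of_nonneg_left
              ((abs_add_le _ _).trans (hc₀ ▸ add_le_add le_rfl (hub t))) (abs_nonneg _)
      have h3 : 2 * (|y t| * c₀) ≤ lam * (y t) ^ 2 + c₀ ^ 2 / lam := by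
        have h5 : (y t) ^ 2 = |y t| ^ 2 := (sq_abs _).symm
        rw [h5, ← sub_nonneg]
        have h6 : lam * |y t| ^ 2 + c₀ ^ 2 / lam - 2 * (|y t| * c₀)
            = (lam * |y t| - c₀) ^ 2 / lam := by
          field_simp
          ring
        rw [h6]
        positivity
      have hsplit : 2 * y t * g t
          = 2 * (y t * (f (y t) - f 0)) + 2 * (y t * (f 0 + u t)) := by
        simp only [hgdef]; ring
      rw [hsplit]
      nlinarith [h1, h2, h3]
    have hgron := le_gronwallBound_of_liminf_deriv_right_le
      (f := fun s => (y s) ^ 2) (f' := fun t => 2 * y t * g t)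
      (δ := x₀ ^ 2) (K := -lam) (ε := c₀ ^ 2 / lam) (a := 0) (b := T)
      (hyc.pow 2)
      (fun t ht r hr => liminf_slope (hVd t ht) r hr)
      (by simpa [hy0] using le_refl (x₀ ^ 2)) hVb
    intro t ht
    have hV := hgron t ht
    have hB := gb_le (x₀ ^ 2) (c₀ ^ 2 / lam) lam (t - 0) hlam (sq_nonneg _)
      (by positivity) (by simpa using ht.1)
    have hVM : (y t) ^ 2 ≤ M ^ 2 := by
      rw [hMsq]
      have he : c₀ ^ 2 / lam / lam = (c₀ / lam) ^ 2 := by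
        field_simp
      calc (y t) ^ 2 ≤ gronwallBound (x₀ ^ 2) (-lam) (c₀ ^ 2 / lam) (t - 0) := hV
        _ ≤ x₀ ^ 2 + c₀ ^ 2 / lam / lam := hB
        _ = x₀ ^ 2 + (c₀ / lam) ^ 2 := by rw [he]
    calc |y t| = Real.sqrt ((y t) ^ 2) := (Real.sqrt_sq_eq_abs _).symm
      _ ≤ Real.sqrt (M ^ 2) := Real.sqrt_le_sqrt hVM
      _ = M := by rw [Real.sqrt_sq hM0]
  -- global integrability
  have glob : ∀ T : ℝ, 0 ≤ T → IntervalIntegrable g volume 0 T := by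
    by_contra hcon
    push_neg at hcon
    obtain ⟨T₁, hT₁, hT₁i⟩ := hcon
    set Cs : Set ℝ := {t | 0 ≤ t ∧ ¬IntervalIntegrable g volume 0 t} with hCs
    have hne : Cs.Nonempty := ⟨T₁, hT₁, hT₁i⟩
    have hbb : BddBelow Cs := ⟨0, fun t ht => ht.1⟩
    set T := sInf Cs with hTdef
    have hT0 : 0 ≤ T := le_csInf hne fun t ht => ht.1
    have hmono : ∀ s t : ℝ, 0 ≤ s → s ≤ t → IntervalIntegrable g volume 0 t →
        IntervalIntegrable g volume 0 s := by
      intro s t hs hst h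
      exact h.mono_set
        (by rw [uIcc_of_le hs, uIcc_of_le (hs.trans hst)]; exact Icc_subset_Icc le_rfl hst)
    have hbefore : ∀ s, 0 ≤ s → s < T → IntervalIntegrable g volume 0 s := by
      intro s hs hsT
      by_contra hc
      exact absurd (csInf_le hbb ⟨hs, hc⟩) (not_le.2 hsT)
    have hafter : ∀ s, T < s → ¬IntervalIntegrable g volume 0 s := by
      intro s hTs h
      obtain ⟨c, hc, hcs⟩ := (csInf_lt_iff hbb hne).1 hTs
      exact hc.2 (hmono c s hc.1 hcs.le h)
    have hyM : ∀ s, 0 ≤ s → s < T → |y s| ≤ M := fun s hs hsT =>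
      (loc s hs (hbefore s hs hsT)).2.1 s ⟨hs, le_rfl⟩
    have hyafter : ∀ s, T < s → y s = x₀ := by
      intro s hs
      rw [hy s (hT0.trans hs.le), intervalIntegral.integral_undef (hafter s hs), add_zero]
    have hycIco : ContinuousOn y (Ico 0 T) := by
      intro t ht
      have h2 : t < (t + T) / 2 := by linarith [ht.2]
      have h3 : (t + T) / 2 < T := by linarith [ht.2]
      have h4 : 0 ≤ (t + T) / 2 := by linarith [ht.1]
      have h5 := (loc _ h4 (hbefore _ h4 h3)).1 t ⟨ht.1, h2.le⟩
      exact h5.mono_of_mem_nhdsWithin (mem_nhdsWithin.2 ⟨Iio ((t + T) / 2), isOpen_Iio, h2,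
        fun s hs => ⟨hs.2.1, hs.1.le⟩⟩)
    have hyae : AEStronglyMeasurable y (volume.restrict (Ioi (0:ℝ))) := by
      have hU : (Ioi (0:ℝ) : Set ℝ) =ᵐ[volume] ((Ioo 0 T ∪ Ioi T : Set ℝ)) := by
        rw [MeasureTheory.ae_eq_set]
        constructor
        · refine measure_mono_null (fun s hs => ?_) (measure_singleton T)
          simp only [mem_diff, mem_Ioi, mem_union, mem_Ioo, not_or, not_and, not_lt] at hs
          have h1 := hs.2.1 hs.1
          have h2 := hs.2.2
          simp only [mem_singleton_iff]
          linarith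
        · refine measure_mono_null (fun s hs => ?_) (measure_empty (μ := volume))
          simp only [mem_diff, mem_union, mem_Ioo, mem_Ioi, not_lt] at hs
          exfalso
          rcases hs.1 with h | h
          · exact absurd h.1 (not_lt.2 hs.2)
          · exact absurd (hT0.trans_lt h) (not_lt.2 hs.2)
      rw [Measure.restrict_congr_set hU, aestronglyMeasurable_union_iff]
      constructor
      · exact (hycIco.mono Ioo_subset_Ico_self).aestronglyMeasurable measurableSet_Ioo
      · exact aestronglyMeasurable_const.congr
          (by filter_upwards [ae_restrict_mem measurableSet_Ioi] with s hs
              using (hyafter s hs).symm)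
    have hgae : AEStronglyMeasurable g (volume.restrict (Ioi (0:ℝ))) :=
      (hfc.comp_aestronglyMeasurable hyae).add (hu_meas hyae)
    set K' := (ξ * (M ^ q + 1) + μ) * M + (|f 0| + γ) + (|f x₀| + γ) with hK'
    have hgbd : ∀ s, 0 ≤ s → s ≠ T → |g s| ≤ K' := by
      intro s hs hsne
      have h8 : (0:ℝ) ≤ |f x₀| + γ := by positivity
      have h9 : (0:ℝ) ≤ (ξ * (M ^ q + 1) + μ) * M + (|f 0| + γ) := by positivity
      rcases lt_or_gt_of_ne hsne with h | h
      · refine (hgK s (hyM s hs h)).trans ?_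
        rw [hK']
        linarith
      · have hgs : g s = f x₀ + u s := by simp only [hgdef]; rw [hyafter s h]
        rw [hgs]
        calc |f x₀ + u s| ≤ |f x₀| + γ := (abs_add_le _ _).trans (add_le_add le_rfl (hub s))
          _ ≤ K' := by rw [hK']; linarith
    have hii : IntervalIntegrable g volume 0 (T + 1) := by
      rw [intervalIntegrable_iff_integrableOn_Ioc_of_le (by linarith)]
      refine Integrable.mono' (integrable_const K')
        (hgae.mono_measure (Measure.restrict_mono Ioc_subset_Ioi_self le_rfl)) ?_
      have hTne : ∀ᵐ s : ℝ, s ≠ T := by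
        have hset : {s : ℝ | ¬s ≠ T} = {T} := by ext s; simp
        rw [MeasureTheory.ae_iff, hset]
        exact measure_singleton T
      filter_upwards [ae_restrict_of_ae hTne, ae_restrict_mem measurableSet_Ioc] with s hsne hs
      simpa [Real.norm_eq_abs] using hgbd s hs.1.le hsne
    exact hafter (T + 1) (by linarith) hii
  exact ⟨glob, fun t ht => (loc t ht (glob t ht)).2.1 t ⟨ht, le_rfl⟩,
    fun T hT => (loc T hT (glob T hT)).1,
    fun t ht => (loc (t + 1) (by linarith) (glob (t + 1) (by linarith))).2.2 t ⟨ht, by linarith⟩,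
    fun t ht => hgK t ((loc t ht (glob t ht)).2.1 t ⟨ht, le_rfl⟩)⟩

/-- Uniform-in-time LLN-type estimate: the sampled-data closed-loop
trajectory `x^δ` stays `O(δ)`-close (in every power `p`) to the closed-loop ODE
trajectory `x`, uniformly in time, for all sufficiently small `δ`. -/
theorem stmt12
    (f κ : ℝ → ℝ) (x₀ : ℝ) (x : ℝ → ℝ)
    -- Assumption (A1)
    (lam ξ μ Lκ γ : ℝ) (q : ℕ)
    (hlam : 0 < lam) (hξ : 0 < ξ) (hμ : 0 < μ) (hLκ : 0 < Lκ) (hγ : 0 < γ)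
    (hcontr : ∀ a b : ℝ, (a - b) * (f a - f b) ≤ -lam * (a - b) ^ 2)
    (hfLip : ∀ a b : ℝ, |f a - f b| ≤ (ξ * (|a| ^ q + |b| ^ q) + μ) * |a - b|)
    (hκLip : ∀ a b : ℝ, |κ a - κ b| ≤ Lκ * |a - b|)
    (hgap : lam / 2 - Lκ > 0)
    (hκbd : ∀ a : ℝ, |κ a| ≤ γ)
    -- the closed-loop ODE `dx/dt = f(x) + κ(x)`, `x(0) = x₀`
    (hx : ∀ t : ℝ, 0 ≤ t → x t = x₀ + ∫ s in (0:ℝ)..t, (f (x s) + κ (x s)))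
    -- the sampled-data closed-loop system
    (xd : ℝ → ℝ → ℝ)
    (hxd : ∀ δ : ℝ, 0 < δ → ∀ t : ℝ, 0 ≤ t →
      xd δ t = x₀ + ∫ s in (0:ℝ)..t, (f (xd δ s) + κ (xd δ (piD δ s))))
    :
    ∀ p : ℕ, 1 ≤ p → ∃ δ₀ : ℝ, 0 < δ₀ ∧ ∃ C : ℝ, 0 < C ∧
      ∀ δ : ℝ, 0 < δ → δ < δ₀ → ∀ t : ℝ, 0 ≤ t →
        |xd δ t - x t| ^ p ≤ C * δ ^ p := by
  intro p hp
  have hκc : Continuous κ := by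
    have hl : LipschitzWith (Real.toNNReal Lκ) κ := by
      apply LipschitzWith.of_dist_le_mul
      intro a b
      rw [Real.coe_toNNReal Lκ hLκ.le, Real.dist_eq, Real.dist_eq]
      exact hκLip a b
    exact hl.continuous
  set M : ℝ := Real.sqrt (x₀ ^ 2 + ((|f 0| + γ) / lam) ^ 2) with hMdef
  have hM0 : 0 ≤ M := Real.sqrt_nonneg _
  clear_value M
  set K : ℝ := (ξ * (M ^ q + 1) + μ) * M + (|f 0| + γ) with hKdef
  have hK0 : 0 < K := by rw [hKdef]; positivity
  clear_value K
  set a : ℝ := lam - Lκ with hadef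
  have ha : 0 < a := by rw [hadef]; linarith
  clear_value a
  set B : ℝ := Lκ * K / a with hBdef
  have hB : 0 < B := by rw [hBdef]; positivity
  clear_value B
  refine ⟨1, one_pos, B ^ p + 1, by positivity, ?_⟩
  intro δ hδ hδ1 t ht
  -- facts about piD
  have hpi_le : ∀ s : ℝ, piD δ s ≤ s := by
    intro s
    have h1 : (⌊s / δ⌋ : ℝ) ≤ s / δ := Int.floor_le _
    calc piD δ s = δ * (⌊s / δ⌋ : ℝ) := rfl
      _ ≤ δ * (s / δ) := by nlinarith
      _ = s := by field_simp
  have hpi_nonneg : ∀ s : ℝ, 0 ≤ s → 0 ≤ piD δ s := by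
    intro s hs
    have h1 : (0 : ℤ) ≤ ⌊s / δ⌋ := Int.floor_nonneg.2 (by positivity)
    have h2 : (0:ℝ) ≤ (⌊s / δ⌋ : ℝ) := by exact_mod_cast h1
    exact mul_nonneg hδ.le h2
  have hpi_lt : ∀ s : ℝ, s < piD δ s + δ := by
    intro s
    have h1 : s / δ < (⌊s / δ⌋ : ℝ) + 1 := Int.lt_floor_add_one _
    have h2 : s < δ * ((⌊s / δ⌋ : ℝ) + 1) := by
      calc s = δ * (s / δ) := by field_simp
        _ < δ * ((⌊s / δ⌋ : ℝ) + 1) := by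
          exact mul_lt_mul_of_pos_left h1 hδ
    calc s < δ * ((⌊s / δ⌋ : ℝ) + 1) := h2
      _ = piD δ s + δ := by unfold piD; ring
  have hpi_eq : ∀ s t' : ℝ, t' ≤ s → s < piD δ t' + δ → piD δ s = piD δ t' := by
    intro s t' hts hlt
    unfold piD at *
    have h1 : ⌊t' / δ⌋ ≤ ⌊s / δ⌋ := Int.floor_le_floor (by gcongr)
    have h2 : ⌊s / δ⌋ < ⌊t' / δ⌋ + 1 := by
      rw [Int.floor_lt]
      push_cast
      rw [div_lt_iff₀ hδ]
      nlinarith [hlt]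
    have h3 : ⌊s / δ⌋ = ⌊t' / δ⌋ := le_antisymm (Int.lt_add_one_iff.1 h2) h1
    rw [h3]
  -- apply key to the continuous closed-loop system
  obtain ⟨hxi, hxb, hxc, hxdv, hxg⟩ := key f κ x₀ lam ξ μ γ q hlam hξ hμ hγ hcontr hfLip hκbd
    x (fun s => κ (x s)) (fun s => ⟨x s, rfl⟩) hx
    (fun t' _ cy => (hκc.continuousAt).comp_continuousWithinAt cy)
    (fun hym => hκc.comp_aestronglyMeasurable hym) M hMdef
  -- apply key to the sampled-data system
  have hu_rc_d : ∀ t' : ℝ, 0 ≤ t' → ContinuousWithinAt (xd δ) (Ici t') t' →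
      ContinuousWithinAt (fun s => κ (xd δ (piD δ s))) (Ici t') t' := by
    intro t' _ _
    have hev : ∀ᶠ s in 𝓝[Ici t'] t', piD δ s = piD δ t' := by
      refine eventually_of_mem (mem_nhdsWithin.2
        ⟨Iio (piD δ t' + δ), isOpen_Iio, hpi_lt t', fun s hs => ?_⟩) (fun s hs => hs)
      exact hpi_eq s t' hs.2 hs.1
    refine continuousWithinAt_const.congr_of_eventuallyEq ?_ rfl
    filter_upwards [hev] with s hs
    rw [hs]
  have hu_meas_d : AEStronglyMeasurable (fun s => κ (xd δ (piD δ s)))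
      (volume.restrict (Ioi (0:ℝ))) := by
    have m1 : Measurable fun s : ℝ => (⌊s / δ⌋ : ℤ) :=
      Int.measurable_floor.comp (measurable_id.div_const δ)
    have m2 : Measurable fun s : ℝ => κ (xd δ (piD δ s)) := by
      have : (fun s : ℝ => κ (xd δ (piD δ s)))
          = (fun n : ℤ => κ (xd δ (δ * n))) ∘ (fun s : ℝ => (⌊s / δ⌋ : ℤ)) := by
        funext s; rfl
      rw [this]
      exact (measurable_of_countable _).comp m1
    exact m2.aestronglyMeasurable
  obtain ⟨hdi, hdb, hdc, hddv, hdg⟩ := key f κ x₀ lam ξ μ γ q hlam hξ hμ hγ hcontr hfLip hκbd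
    (xd δ) (fun s => κ (xd δ (piD δ s))) (fun s => ⟨xd δ (piD δ s), rfl⟩) (hxd δ hδ)
    (fun t' ht' hcy => hu_rc_d t' ht' hcy) (fun _ => hu_meas_d) M hMdef
  set gd : ℝ → ℝ := fun s => f (xd δ s) + κ (xd δ (piD δ s)) with hgd
  set gx : ℝ → ℝ := fun s => f (x s) + κ (x s) with hgx
  have hdgK : ∀ s : ℝ, 0 ≤ s → |gd s| ≤ K := fun s hs => hKdef ▸ hdg s hs
  -- sampled increment bound
  have hsamp : ∀ s : ℝ, 0 ≤ s → |xd δ (piD δ s) - xd δ s| ≤ K * δ := by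
    intro s hs
    have hp0 : 0 ≤ piD δ s := hpi_nonneg s hs
    have hps : piD δ s ≤ s := hpi_le s
    have i1 : IntervalIntegrable gd volume 0 (piD δ s) := hdi _ hp0
    have i2 : IntervalIntegrable gd volume (piD δ s) s := (hdi s hs).mono_set
      (by rw [uIcc_of_le hps, uIcc_of_le hs]; exact Icc_subset_Icc hp0 le_rfl)
    have e1 : xd δ s - xd δ (piD δ s) = ∫ r in piD δ s..s, gd r := by
      rw [hxd δ hδ s hs, hxd δ hδ (piD δ s) hp0]
      have h := intervalIntegral.integral_add_adjacent_intervals i1 i2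
      have h2 : (∫ r in (0:ℝ)..s, gd r)
          = (∫ r in (0:ℝ)..piD δ s, gd r) + ∫ r in piD δ s..s, gd r := h.symm
      rw [h2]
      ring
    rw [abs_sub_comm, e1]
    have hb := intervalIntegral.norm_integral_le_of_norm_le_const (C := K)
      (f := gd) (a := piD δ s) (b := s) (fun r hr => by
        rw [uIoc_of_le hps] at hr
        exact (Real.norm_eq_abs _).symm ▸ (by
          simpa [Real.norm_eq_abs] using hdgK r (hp0.trans hr.1.le)))
    rw [Real.norm_eq_abs] at hb
    refine hb.trans ?_
    have h3 : |s - piD δ s| ≤ δ := by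
      rw [abs_of_nonneg (by linarith)]
      have := hpi_lt s
      linarith
    calc K * |s - piD δ s| ≤ K * δ := mul_le_mul_of_nonneg_left h3 hK0.le
      _ = K * δ := rfl
  -- the error function and its square
  have he0 : xd δ 0 - x 0 = 0 := by
    have h1 : x 0 = x₀ := by simpa using hx 0 le_rfl
    have h2 : xd δ 0 = x₀ := by simpa using hxd δ hδ 0 le_rfl
    rw [h1, h2, sub_self]
  have heD : ∀ s : ℝ, 0 ≤ s → HasDerivWithinAt (fun r => xd δ r - x r)
      (gd s - gx s) (Ici s) s := fun s hs => (hddv s hs).sub (hxdv s hs)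
  have hED : ∀ s : ℝ, 0 ≤ s → HasDerivWithinAt (fun r => (xd δ r - x r) ^ 2)
      (2 * (xd δ s - x s) * (gd s - gx s)) (Ici s) s := by
    intro s hs
    have h := (heD s hs).fun_pow 2
    refine h.congr_deriv ?_
    push_cast
    ring
  -- the differential inequality
  have hEb : ∀ s : ℝ, 0 ≤ s → 2 * (xd δ s - x s) * (gd s - gx s)
      ≤ (-a) * (xd δ s - x s) ^ 2 + (Lκ * K * δ) ^ 2 / a := by
    intro s hs
    have h1 : (xd δ s - x s) * (f (xd δ s) - f (x s))
        ≤ (-a - Lκ) * (xd δ s - x s) ^ 2 := by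
      calc (xd δ s - x s) * (f (xd δ s) - f (x s))
          ≤ -lam * (xd δ s - x s) ^ 2 := hcontr _ _
        _ = (-a - Lκ) * (xd δ s - x s) ^ 2 := by rw [hadef]; ring
    have h2 : |κ (xd δ (piD δ s)) - κ (x s)| ≤ Lκ * (K * δ) + Lκ * |xd δ s - x s| := by
      calc |κ (xd δ (piD δ s)) - κ (x s)| ≤ Lκ * |xd δ (piD δ s) - x s| := hκLip _ _
        _ ≤ Lκ * (|xd δ (piD δ s) - xd δ s| + |xd δ s - x s|) :=
            mul_le_mul_of_nonneg_left (abs_sub_le _ _ _) hLκ.le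
        _ ≤ Lκ * (K * δ + |xd δ s - x s|) := mul_le_mul_of_nonneg_left
            (add_le_add (hsamp s hs) le_rfl) hLκ.le
        _ = Lκ * (K * δ) + Lκ * |xd δ s - x s| := by ring
    have h3 : (xd δ s - x s) * (κ (xd δ (piD δ s)) - κ (x s))
        ≤ |xd δ s - x s| * (Lκ * (K * δ)) + Lκ * (xd δ s - x s) ^ 2 := by
      have h4 : (xd δ s - x s) * (κ (xd δ (piD δ s)) - κ (x s))
          ≤ |xd δ s - x s| * (Lκ * (K * δ) + Lκ * |xd δ s - x s|) := by
        calc (xd δ s - x s) * (κ (xd δ (piD δ s)) - κ (x s))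
            ≤ |(xd δ s - x s) * (κ (xd δ (piD δ s)) - κ (x s))| := le_abs_self _
          _ = |xd δ s - x s| * |κ (xd δ (piD δ s)) - κ (x s)| := abs_mul _ _
          _ ≤ |xd δ s - x s| * (Lκ * (K * δ) + Lκ * |xd δ s - x s|) :=
              mul_le_mul_of_nonneg_left h2 (abs_nonneg _)
      have h5 : |xd δ s - x s| * (Lκ * (K * δ) + Lκ * |xd δ s - x s|)
          = |xd δ s - x s| * (Lκ * (K * δ)) + Lκ * |xd δ s - x s| ^ 2 := by ring
      rw [h5, sq_abs] at h4
      exact h4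
    have h6 : 2 * (|xd δ s - x s| * (Lκ * (K * δ)))
        ≤ a * (xd δ s - x s) ^ 2 + (Lκ * K * δ) ^ 2 / a := by
      rw [← sub_nonneg]
      have h7 : a * (xd δ s - x s) ^ 2 + (Lκ * K * δ) ^ 2 / a
            - 2 * (|xd δ s - x s| * (Lκ * (K * δ)))
          = (a * |xd δ s - x s| - Lκ * K * δ) ^ 2 / a := by
        field_simp
        linear_combination (-(a ^ 2)) * (sq_abs (xd δ s - x s))
      rw [h7]
      positivity
    have hsplit : 2 * (xd δ s - x s) * (gd s - gx s)
        = 2 * ((xd δ s - x s) * (f (xd δ s) - f (x s)))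
          + 2 * ((xd δ s - x s) * (κ (xd δ (piD δ s)) - κ (x s))) := by
      simp only [hgd, hgx]; ring
    rw [hsplit]
    linarith [h1, h3, h6]
  -- Gronwall
  have hgron : (xd δ t - x t) ^ 2 ≤ (Lκ * K * δ) ^ 2 / a / a := by
    have hcontE : ContinuousOn (fun r => (xd δ r - x r) ^ 2) (Icc 0 t) :=
      ((hdc t ht).sub (hxc t ht)).pow 2
    have hg := le_gronwallBound_of_liminf_deriv_right_le
      (f := fun r => (xd δ r - x r) ^ 2)
      (f' := fun r => 2 * (xd δ r - x r) * (gd r - gx r))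
      (δ := 0) (K := -a) (ε := (Lκ * K * δ) ^ 2 / a) (a := 0) (b := t)
      hcontE
      (fun r hr r' hr' => liminf_slope (hED r hr.1) r' hr')
      (by simp [he0])
      (fun r hr => hEb r hr.1)
      t ⟨ht, le_rfl⟩
    refine hg.trans ?_
    have hb2 := gb_le 0 ((Lκ * K * δ) ^ 2 / a) a (t - 0) ha le_rfl (by positivity)
      (by simpa using ht)
    simpa using hb2
  -- conclusion
  have hfin : |xd δ t - x t| ≤ B * δ := by
    have h1 : (Lκ * K * δ) ^ 2 / a / a = (B * δ) ^ 2 := by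
      rw [hBdef]
      field_simp
    have h2 : (xd δ t - x t) ^ 2 ≤ (B * δ) ^ 2 := by rw [← h1]; exact hgron
    calc |xd δ t - x t| = Real.sqrt ((xd δ t - x t) ^ 2) := (Real.sqrt_sq_eq_abs _).symm
      _ ≤ Real.sqrt ((B * δ) ^ 2) := Real.sqrt_le_sqrt h2
      _ = B * δ := Real.sqrt_sq (by positivity)
  calc |xd δ t - x t| ^ p ≤ (B * δ) ^ p := pow_le_pow_left₀ (abs_nonneg _) hfin p
    _ = B ^ p * δ ^ p := mul_pow _ _ _
    _ ≤ (B ^ p + 1) * δ ^ p := by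
        have : (0:ℝ) ≤ δ ^ p := by positivity
        nlinarith
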